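/- Assume S ≠ ∅ and T ≠ ∅, and assume the lower image 𝒟* has at least one vertex. Then 𝒫 = {y ∈ ℝ^q | φ(y, t*) ≥ 0 for every vertex t* of 𝒟*}; that is, a point y belongs to the upper image 𝒫 if and only if φ(y, t*) ≥ 0 for all vertices t* of 𝒟*. -/

import Mathlib

open Set Finset

section Cone
variable {E : Type*} [AddCommGroup E] [Module ℝ E] {ι : Type*} [Fintype ι]

/-- conic hull of a finite family -/
def coneOf (g : ι → E) : Set E := {x | ∃ c : ι → ℝ, (∀ i, 0 ≤ c i) ∧ x = ∑ i, c i • g i}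

def GoodSet (g : ι → E) (s : Finset ι) : Prop :=
  ∀ d : ι → ℝ, (∀ i ∉ s, d i = 0) → ∑ i, d i • g i = 0 → ∀ i, d i = 0

theorem cara (g : ι → E) (s : Finset ι) : ∀ c : ι → ℝ, (∀ i, 0 ≤ c i) → (∀ i ∉ s, c i = 0) →
    ∃ t : Finset ι, GoodSet g t ∧ ∃ c' : ι → ℝ, (∀ i, 0 ≤ c' i) ∧ (∀ i ∉ t, c' i = 0) ∧
      ∑ i, c' i • g i = ∑ i, c i • g i := by
  classical
  induction s using Finset.strongInduction with
  | _ s ih =>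
    intro c hc hsupp
    by_cases hgood : GoodSet g s
    · exact ⟨s, hgood, c, hc, hsupp, rfl⟩
    · simp only [GoodSet, not_forall] at hgood
      obtain ⟨d, hdsupp, hdsum, i₁, hi₁⟩ := hgood
      -- WLOG there is i with d i > 0
      obtain ⟨d, hdsupp, hdsum, i₁, hi₁⟩ :
          ∃ d : ι → ℝ, (∀ i ∉ s, d i = 0) ∧ (∑ i, d i • g i = 0) ∧ ∃ i, 0 < d i := by
        rcases lt_or_gt_of_ne (Ne.symm hi₁) with h | h
        · exact ⟨d, hdsupp, hdsum, i₁, h⟩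
        · exact ⟨-d, fun i hi => by simp [hdsupp i hi], by
            simpa [neg_smul] using congrArg Neg.neg hdsum, i₁, by simpa using h⟩
      have hi₁s : i₁ ∈ s := by
        by_contra h; rw [hdsupp i₁ h] at hi₁; exact lt_irrefl 0 hi₁
      set sp := s.filter (fun i => 0 < d i) with hsp
      have hspne : sp.Nonempty := ⟨i₁, by simp [hsp, hi₁s, hi₁]⟩
      obtain ⟨i₀, hi₀mem, hi₀min⟩ := sp.exists_min_image (fun i => c i / d i) hspne
      have hi₀sp : 0 < d i₀ := (Finset.mem_filter.mp hi₀mem).2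
      have hi₀s : i₀ ∈ s := (Finset.mem_filter.mp hi₀mem).1
      set t := c i₀ / d i₀ with ht
      have htnn : 0 ≤ t := div_nonneg (hc i₀) hi₀sp.le
      set c' := fun i => c i - t * d i with hc'
      have hc'nn : ∀ i, 0 ≤ c' i := by
        intro i
        rcases le_or_gt (d i) 0 with h | h
        · have : t * d i ≤ 0 := mul_nonpos_of_nonneg_of_nonpos htnn h
          simp only [hc']; linarith [hc i]
        · have his : i ∈ s := by
            by_contra hns; rw [hdsupp i hns] at h; exact lt_irrefl 0 h
          have hmem : i ∈ sp := Finset.mem_filter.mpr ⟨his, h⟩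
          have := hi₀min i hmem
          simp only [hc']
          rw [div_le_div_iff₀ hi₀sp h] at this
          have : t * d i ≤ c i := by
            rw [ht, div_mul_eq_mul_div, div_le_iff₀ hi₀sp]; linarith
          linarith
      have hc'supp : ∀ i ∉ s.erase i₀, c' i = 0 := by
        intro i hi
        by_cases h : i = i₀
        · subst h; simp [hc', ht, div_mul_cancel₀ _ (ne_of_gt hi₀sp)]
        · have hns : i ∉ s := fun hmem => hi (Finset.mem_erase.mpr ⟨h, hmem⟩)
          simp [hc', hsupp i hns, hdsupp i hns]
      have hc'sum : ∑ i, c' i • g i = ∑ i, c i • g i := by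
        simp only [hc', sub_smul, mul_smul, Finset.sum_sub_distrib]
        rw [← Finset.smul_sum, hdsum, smul_zero, sub_zero]
      obtain ⟨t', hgood', c'', h1, h2, h3⟩ :=
        ih (s.erase i₀) (Finset.erase_ssubset hi₀s) c' hc'nn hc'supp
      exact ⟨t', hgood', c'', h1, h2, h3.trans hc'sum⟩
end Cone

section Closed
variable {E : Type*} [NormedAddCommGroup E] [NormedSpace ℝ E] [FiniteDimensional ℝ E]
  {ι : Type*} [Fintype ι]

theorem isClosed_piece (g : ι → E) (s : Finset ι) (hs : GoodSet g s) :
    IsClosed {x | ∃ c : ι → ℝ, (∀ i, 0 ≤ c i) ∧ (∀ i ∉ s, c i = 0) ∧ x = ∑ i, c i • g i} := by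
  classical
  set L : ((↥s : Type _) → ℝ) →ₗ[ℝ] E :=
    Fintype.linearCombination ℝ (fun j : ↥s => g (j : ι)) with hLdef
  have hLapp : ∀ c : (↥s : Type _) → ℝ, L c = ∑ j : ↥s, c j • g (j : ι) := by
    intro c; rw [hLdef, Fintype.linearCombination_apply]
  have hker : LinearMap.ker L = ⊥ := by
    rw [LinearMap.ker_eq_bot']
    intro c hc
    set d : ι → ℝ := fun i => if h : i ∈ s then c ⟨i, h⟩ else 0 with hd
    have hdsum : ∑ i, d i • g i = 0 := by
      rw [← Finset.sum_subset (Finset.subset_univ s)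
        (by intro i _ hi; simp [hd, hi]), ← Finset.sum_attach s (fun i => d i • g i)]
      have : ∀ j : ↥s, d (j : ι) • g (j : ι) = c j • g (j : ι) := by
        intro j; simp [hd, j.2]
      rw [Finset.sum_congr rfl (fun j _ => this j)]
      simpa [hLapp] using hc
    have hall := hs d (fun i hi => by simp [hd, hi]) hdsum
    funext j
    have := hall (j : ι)
    simpa [hd, j.2] using this
  have hemb := LinearMap.isClosedEmbedding_of_injective (𝕜 := ℝ) hker
  have himg : {x | ∃ c : ι → ℝ, (∀ i, 0 ≤ c i) ∧ (∀ i ∉ s, c i = 0) ∧ x = ∑ i, c i • g i}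
      = L '' {c | ∀ j, 0 ≤ c j} := by
    ext x; constructor
    · rintro ⟨c, hc, hsupp, rfl⟩
      refine ⟨fun j => c (j : ι), fun j => hc _, ?_⟩
      rw [hLapp, Finset.sum_coe_sort s (fun i => c i • g i)]
      exact Finset.sum_subset (Finset.subset_univ s) (fun i _ hi => by simp [hsupp i hi])
    · rintro ⟨c, hc, rfl⟩
      refine ⟨fun i => if h : i ∈ s then c ⟨i, h⟩ else 0,
        fun i => by
          by_cases h : i ∈ s
          · simpa [h] using hc ⟨i, h⟩
          · simp [h],
        fun i hi => by simp [hi], ?_⟩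
      rw [hLapp, ← Finset.sum_subset (Finset.subset_univ s)
        (by intro i _ hi; simp [hi]), ← Finset.sum_attach s
          (fun i => (if h : i ∈ s then c ⟨i, h⟩ else 0) • g i)]
      exact Finset.sum_congr rfl (fun j _ => by simp [j.2])
  rw [himg]
  have hcl : IsClosed {c : (↥s : Type _) → ℝ | ∀ j, 0 ≤ c j} := by
    have : {c : (↥s : Type _) → ℝ | ∀ j, 0 ≤ c j} = ⋂ j, {c | 0 ≤ c j} := by
      ext; simp [Set.mem_iInter]
    rw [this]
    exact isClosed_iInter fun j => isClosed_le continuous_const (continuous_apply j)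
  exact hemb.isClosedMap _ hcl

theorem isClosed_coneOf (g : ι → E) : IsClosed (coneOf g) := by
  classical
  have heq : coneOf g = ⋃ s : {s : Finset ι // GoodSet g s},
      {x | ∃ c : ι → ℝ, (∀ i, 0 ≤ c i) ∧ (∀ i ∉ s.1, c i = 0) ∧ x = ∑ i, c i • g i} := by
    ext x; constructor
    · rintro ⟨c, hc, rfl⟩
      obtain ⟨t, hgood, c', h1, h2, h3⟩ := cara g Finset.univ c hc (by simp)
      exact Set.mem_iUnion.mpr ⟨⟨t, hgood⟩, c', h1, h2, h3.symm⟩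
    · intro hmem
      obtain ⟨⟨t, ht⟩, c, h1, _, h3⟩ := Set.mem_iUnion.mp hmem
      exact ⟨c, h1, h3⟩
  rw [heq]
  exact isClosed_iUnion_of_finite fun s => isClosed_piece g s.1 s.2

theorem convex_coneOf (g : ι → E) : Convex ℝ (coneOf g) := by
  rintro x ⟨cx, hcx, rfl⟩ y ⟨cy, hcy, rfl⟩ a b ha hb _
  refine ⟨fun i => a * cx i + b * cy i,
    fun i => add_nonneg (mul_nonneg ha (hcx i)) (mul_nonneg hb (hcy i)), ?_⟩
  simp [Finset.smul_sum, ← Finset.sum_add_distrib, add_smul, mul_smul]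

theorem zero_mem_coneOf (g : ι → E) : 0 ∈ coneOf g :=
  ⟨fun _ => 0, fun _ => le_rfl, by simp⟩

theorem smul_gen_mem_coneOf (g : ι → E) (i : ι) {r : ℝ} (hr : 0 ≤ r) :
    r • g i ∈ coneOf g := by
  classical
  refine ⟨fun j => if j = i then r else 0, fun j => by by_cases h : j = i <;> simp [h, hr], ?_⟩
  simp [ite_smul]

theorem coneOf_separation (g : ι → E) {x : E} (hx : x ∉ coneOf g) :
    ∃ f : E →L[ℝ] ℝ, (∀ i, f (g i) ≤ 0) ∧ 0 < f x := by
  obtain ⟨f, u, hfx, hfs⟩ :=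
    geometric_hahn_banach_point_closed (convex_coneOf g) (isClosed_coneOf g) hx
  have hu : u < 0 := by simpa using hfs 0 (zero_mem_coneOf g)
  have hgen : ∀ i, 0 ≤ f (g i) := by
    intro i; by_contra h; push_neg at h
    have hrpos : 0 < u / f (g i) := div_pos_of_neg_of_neg hu h
    have hmem := hfs _ (smul_gen_mem_coneOf g i hrpos.le)
    rw [map_smul, smul_eq_mul, div_mul_cancel₀ u (ne_of_lt h)] at hmem
    exact lt_irrefl u hmem
  exact ⟨-f, fun i => by simpa using hgen i, by simp; linarith⟩

end Closed

open Matrix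
section Helpers

theorem sum_single_smul {a : ℕ} (x : Fin a → ℝ) :
    ∑ i, x i • (Pi.single i 1 : Fin a → ℝ) = x := by
  have h : ∀ i : Fin a, x i • (Pi.single i 1 : Fin a → ℝ) = Pi.single i (x i) := by
    intro i; funext j
    by_cases h : j = i <;> simp [Pi.single_apply, h]
  rw [Finset.sum_congr rfl (fun i _ => h i), Finset.univ_sum_single]

theorem clm_decompose {a b : ℕ} (f : ((Fin a → ℝ) × (Fin b → ℝ)) →L[ℝ] ℝ)
    (x : Fin a → ℝ) (y : Fin b → ℝ) :
    f (x, y) = (∑ i, x i * f (Pi.single i 1, 0)) + ∑ i, y i * f (0, Pi.single i 1) := by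
  have hxy : (x, y) = (∑ i, x i • (((Pi.single i 1 : Fin a → ℝ), (0 : Fin b → ℝ)) :
      (Fin a → ℝ) × (Fin b → ℝ)))
      + ∑ i, y i • (((0 : Fin a → ℝ), (Pi.single i 1 : Fin b → ℝ)) :
      (Fin a → ℝ) × (Fin b → ℝ)) := by
    apply Prod.ext <;> simp [Prod.fst_sum, Prod.snd_sum, sum_single_smul]
  rw [hxy, map_add, map_sum, map_sum]
  simp only [_root_.map_smul, smul_eq_mul]

theorem clm_decompose' {a : ℕ} (f : ((Fin a → ℝ) × ℝ) →L[ℝ] ℝ)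
    (x : Fin a → ℝ) (t : ℝ) :
    f (x, t) = (∑ i, x i * f (Pi.single i 1, 0)) + t * f (0, 1) := by
  have hxy : (x, t) = (∑ i, x i • (((Pi.single i 1 : Fin a → ℝ), (0 : ℝ)) : (Fin a → ℝ) × ℝ))
      + t • (((0 : Fin a → ℝ), (1 : ℝ)) : (Fin a → ℝ) × ℝ) := by
    apply Prod.ext <;> simp [Prod.fst_sum, Prod.snd_sum, sum_single_smul]
  rw [hxy, map_add, map_sum, _root_.map_smul]
  simp only [_root_.map_smul, smul_eq_mul]

theorem sum_smul_col {a n : ℕ} (M : Matrix (Fin a) (Fin n) ℝ) (c : Fin n → ℝ) :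
    ∑ j, c j • (fun i => M i j) = M.mulVec c := by
  funext i
  rw [Finset.sum_apply]
  simp [Matrix.mulVec, dotProduct, mul_comm]

theorem sum_smul_row {m n : ℕ} (M : Matrix (Fin m) (Fin n) ℝ) (c : Fin m → ℝ) :
    ∑ i, c i • (fun j => M i j) = M.transpose.mulVec c := by
  funext j
  rw [Finset.sum_apply]
  simp [Matrix.mulVec, dotProduct, Matrix.transpose_apply, mul_comm]

theorem mulVec_apply_sum {m n : ℕ} (M : Matrix (Fin m) (Fin n) ℝ) (z : Fin n → ℝ) (i : Fin m) :
    M.mulVec z i = ∑ j, M i j * z j := by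
  simp [Matrix.mulVec, dotProduct]

end Helpers

section Farkas

/-- Farkas: a valid inequality over a nonempty polyhedron has a dual certificate. -/
theorem farkas_valid {m n : ℕ} (A : Matrix (Fin m) (Fin n) ℝ) (b : Fin m → ℝ)
    (x₀ : Fin n → ℝ) (hx₀ : b ≤ A.mulVec x₀)
    (w : Fin n → ℝ) (γ : ℝ) (hval : ∀ x, b ≤ A.mulVec x → γ ≤ w ⬝ᵥ x) :
    ∃ u : Fin m → ℝ, (0 ≤ u) ∧ A.transpose.mulVec u = w ∧ γ ≤ b ⬝ᵥ u := by
  classical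
  set g : (Fin m ⊕ Unit) → (Fin n → ℝ) × ℝ :=
    Sum.elim (fun i => ((fun j => A i j), b i)) (fun _ => (0, -1)) with hg
  by_cases hmem : (w, γ) ∈ coneOf g
  · obtain ⟨c, hc, hsum⟩ := hmem
    rw [Fintype.sum_sum_type] at hsum
    refine ⟨fun i => c (Sum.inl i), fun i => hc _, ?_, ?_⟩
    · have h1 := congrArg Prod.fst hsum
      simp only [Prod.fst_add, Prod.fst_sum, hg, Sum.elim_inl, Sum.elim_inr, Prod.smul_mk,
        smul_zero] at h1
      rw [sum_smul_row A (fun i => c (Sum.inl i))] at h1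
      simpa using h1.symm
    · have h2 := congrArg Prod.snd hsum
      simp only [Prod.snd_add, Prod.snd_sum, hg, Sum.elim_inl, Sum.elim_inr, Prod.smul_mk,
        smul_eq_mul] at h2
      have hbu : b ⬝ᵥ (fun i => c (Sum.inl i)) = ∑ i, c (Sum.inl i) * b i := by
        simp [dotProduct, mul_comm]
      rw [hbu]
      have hc' := hc (Sum.inr ())
      simp at h2
      linarith [h2]
  · obtain ⟨f, hfg, hfx⟩ := coneOf_separation g hmem
    have hτ : 0 ≤ f (0, 1) := by
      have h := hfg (Sum.inr ())
      simp only [hg, Sum.elim_inr] at h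
      have h0 : (((0 : Fin n → ℝ), (-1 : ℝ)) : (Fin n → ℝ) × ℝ)
          = -(((0 : Fin n → ℝ), (1 : ℝ)) : (Fin n → ℝ) × ℝ) := by simp [Prod.ext_iff]
      rw [h0, map_neg] at h
      linarith
    set z : Fin n → ℝ := fun j => f (Pi.single j 1, 0) with hz
    set τ : ℝ := f (0, 1) with hτdef
    have hrow : ∀ i, A.mulVec z i + τ * b i ≤ 0 := by
      intro i
      have h := hfg (Sum.inl i)
      simp only [hg, Sum.elim_inl] at h
      rw [clm_decompose'] at h
      rw [mulVec_apply_sum]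
      have : ∑ j, A i j * z j = ∑ j, A i j * f (Pi.single j 1, 0) := rfl
      rw [this]
      linarith [h]
    have hwz : 0 < (w ⬝ᵥ z) + γ * τ := by
      have h := hfx
      rw [clm_decompose'] at h
      have : w ⬝ᵥ z = ∑ j, w j * f (Pi.single j 1, 0) := rfl
      rw [this]
      linarith [h]
    exfalso
    rcases eq_or_lt_of_le hτ with hτ0 | hτpos
    · have hAz : ∀ i, A.mulVec z i ≤ 0 := fun i => by have := hrow i; rw [← hτ0] at this; linarith
      have hwzpos : 0 < w ⬝ᵥ z := by rw [← hτ0] at hwz; linarith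
      set n₀ := (w ⬝ᵥ x₀ - γ + 1) / (w ⬝ᵥ z) with hn₀
      have hn₀pos : 0 < n₀ := by
        apply div_pos _ hwzpos
        linarith [hval x₀ hx₀]
      have hfeas : b ≤ A.mulVec (x₀ - n₀ • z) := by
        intro i
        have hsplit : A.mulVec (x₀ - n₀ • z) i = A.mulVec x₀ i - n₀ * A.mulVec z i := by
          rw [Matrix.mulVec_sub, Matrix.mulVec_smul]
          simp
        rw [hsplit]
        have h1 := mul_nonpos_of_nonneg_of_nonpos hn₀pos.le (hAz i)
        have hb := hx₀ i
        simp only [Pi.le_def] at hb ⊢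
        linarith
      have hv := hval _ hfeas
      have hdot : w ⬝ᵥ (x₀ - n₀ • z) = w ⬝ᵥ x₀ - n₀ * (w ⬝ᵥ z) := by
        rw [dotProduct_sub]
        congr 1
        rw [dotProduct_smul, smul_eq_mul]
      rw [hdot, hn₀, div_mul_cancel₀ _ (ne_of_gt hwzpos)] at hv
      linarith
    · set x := (-(1/τ)) • z with hx
      have hfeas : b ≤ A.mulVec x := by
        intro i
        have hAx : A.mulVec x i = -(1/τ) * A.mulVec z i := by
          rw [hx, Matrix.mulVec_smul]
          simp
        have h1 : A.mulVec z i ≤ -(τ * b i) := by linarith [hrow i]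
        have h2 : 0 < 1/τ := one_div_pos.mpr hτpos
        have h3 : -(1/τ) * (-(τ * b i)) ≤ -(1/τ) * A.mulVec z i :=
          mul_le_mul_of_nonpos_left h1 (by linarith)
        have h4 : -(1/τ) * (-(τ * b i)) = b i := by field_simp
        rw [hAx]
        linarith
      have hv := hval _ hfeas
      have hwx : w ⬝ᵥ x = -(1/τ) * (w ⬝ᵥ z) := by
        rw [hx, dotProduct_smul, smul_eq_mul]
      rw [hwx] at hv
      have h5 : τ * γ ≤ τ * (-(1/τ) * (w ⬝ᵥ z)) := mul_le_mul_of_nonneg_left hv hτpos.le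
      have h6 : τ * (-(1/τ) * (w ⬝ᵥ z)) = -(w ⬝ᵥ z) := by
        field_simp
      nlinarith [hwz]
end Farkas

section FarkasUpper

theorem farkas_upper {q' m n o : ℕ} (A : Matrix (Fin m) (Fin n) ℝ)
    (P : Matrix (Fin q') (Fin n) ℝ) (b : Fin m → ℝ) (Y : Matrix (Fin q') (Fin o) ℝ)
    (y : Fin q' → ℝ)
    (hy : ¬ ∃ x l, b ≤ A.mulVec x ∧ (0 : Fin o → ℝ) ≤ l ∧ y = P.mulVec x + Y.mulVec l) :
    ∃ (u : Fin m → ℝ) (w : Fin q' → ℝ), 0 ≤ u ∧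
      A.transpose.mulVec u = P.transpose.mulVec w ∧
      0 ≤ Y.transpose.mulVec w ∧ w ⬝ᵥ y < b ⬝ᵥ u := by
  classical
  set g : ((Fin n ⊕ Fin n) ⊕ (Fin o ⊕ Fin m)) → (Fin q' → ℝ) × (Fin m → ℝ) :=
    Sum.elim
      (Sum.elim (fun j => (((fun i => P i j) : Fin q' → ℝ), ((fun i => A i j) : Fin m → ℝ)))
        (fun j => -(((fun i => P i j) : Fin q' → ℝ), ((fun i => A i j) : Fin m → ℝ))))
      (Sum.elim (fun l => (((fun i => Y i l) : Fin q' → ℝ), (0 : Fin m → ℝ)))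
        (fun i => ((0 : Fin q' → ℝ), -(Pi.single i 1 : Fin m → ℝ)))) with hg
  have hcone : (y, b) ∉ coneOf g := by
    intro hmem
    obtain ⟨c, hc, hsum⟩ := hmem
    rw [Fintype.sum_sum_type, Fintype.sum_sum_type, Fintype.sum_sum_type] at hsum
    set x : Fin n → ℝ := fun j => c (Sum.inl (Sum.inl j)) - c (Sum.inl (Sum.inr j)) with hx
    set lam : Fin o → ℝ := fun l => c (Sum.inr (Sum.inl l)) with hlam
    set sl : Fin m → ℝ := fun i => c (Sum.inr (Sum.inr i)) with hsl
    have hxsum : ∀ (a : ℕ) (M : Matrix (Fin a) (Fin n) ℝ),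
        (∑ j, c (Sum.inl (Sum.inl j)) • ((fun i => M i j) : Fin a → ℝ))
        - ∑ j, c (Sum.inl (Sum.inr j)) • ((fun i => M i j) : Fin a → ℝ) = M.mulVec x := by
      intro a M
      rw [← Finset.sum_sub_distrib, ← sum_smul_col M x]
      exact Finset.sum_congr rfl fun j _ => by rw [hx, sub_smul]
    apply hy
    refine ⟨x, lam, ?_, fun l => hc _, ?_⟩
    · -- b ≤ A *ᵥ x
      have h2 := congrArg Prod.snd hsum
      simp only [Prod.snd_add, Prod.snd_sum, hg, Sum.elim_inl, Sum.elim_inr, Prod.smul_mk,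
        Prod.fst_neg, Prod.snd_neg, smul_neg, smul_zero, Finset.sum_neg_distrib,
        Finset.sum_const_zero, add_zero, zero_add] at h2
      have hxA := hxsum m A
      rw [sub_eq_add_neg] at hxA
      rw [hxA] at h2
      intro i0
      have happ := congrFun h2 i0
      simp only [Pi.add_apply, Pi.neg_apply, Finset.sum_apply, Pi.smul_apply, smul_eq_mul] at happ
      have hsingle : ∑ i, c (Sum.inr (Sum.inr i)) * (Pi.single i 1 : Fin m → ℝ) i0
          = c (Sum.inr (Sum.inr i0)) := by
        simp [Pi.single_apply]
      rw [hsingle] at happ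
      have hcc := hc (Sum.inr (Sum.inr i0))
      show b i0 ≤ A.mulVec x i0
      linarith
    · -- y = P x + Y lam
      have h1 := congrArg Prod.fst hsum
      simp only [Prod.fst_add, Prod.fst_sum, hg, Sum.elim_inl, Sum.elim_inr, Prod.smul_mk,
        Prod.fst_neg, Prod.snd_neg, smul_neg, smul_zero, Finset.sum_neg_distrib,
        Finset.sum_const_zero, add_zero, neg_zero] at h1
      have hxP := hxsum q' P
      rw [sub_eq_add_neg] at hxP
      rw [hxP] at h1
      have hYs : ∑ l, c (Sum.inr (Sum.inl l)) • ((fun i => Y i l) : Fin q' → ℝ)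
          = Y.mulVec lam := by
        rw [← sum_smul_col Y lam]
      rw [hYs] at h1
      exact h1
  obtain ⟨f, hfg, hfx⟩ := coneOf_separation g hcone
  set u : Fin m → ℝ := fun i => f (0, Pi.single i 1) with hu
  set w : Fin q' → ℝ := fun i => -f (Pi.single i 1, 0) with hw
  have hfs : ∀ i, f (Pi.single i 1, 0) = -(w i) := fun i => by rw [hw]; ring
  have hunn : 0 ≤ u := by
    intro i
    have h := hfg (Sum.inr (Sum.inr i))
    simp only [hg, Sum.elim_inr] at h
    have h0 : ((0 : Fin q' → ℝ), -(Pi.single i 1 : Fin m → ℝ))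
        = -(((0 : Fin q' → ℝ), (Pi.single i 1 : Fin m → ℝ))) := by simp [Prod.ext_iff]
    rw [h0, map_neg] at h
    have h1 : 0 ≤ f (0, Pi.single i 1) := by linarith
    show (0 : Fin m → ℝ) i ≤ u i
    simpa [hu] using h1
  have heq : ∀ j, (∑ i, P i j * (-(w i))) + ∑ i, A i j * u i = 0 := by
    intro j
    have h1 := hfg (Sum.inl (Sum.inl j))
    have h2 := hfg (Sum.inl (Sum.inr j))
    simp only [hg, Sum.elim_inl, Sum.elim_inr] at h1 h2
    rw [map_neg] at h2
    have h3 : f ((fun i => P i j), (fun i => A i j)) = 0 := le_antisymm h1 (by linarith)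
    rw [clm_decompose] at h3
    rw [← h3]
    exact congrArg₂ (· + ·) (Finset.sum_congr rfl fun i _ => by rw [hfs]) rfl
  have hAP : A.transpose.mulVec u = P.transpose.mulVec w := by
    funext j
    rw [mulVec_apply_sum, mulVec_apply_sum]
    have h := heq j
    have hs : ∑ i, P i j * (-(w i)) = -∑ i, P i j * w i := by
      rw [← Finset.sum_neg_distrib]
      exact Finset.sum_congr rfl fun i _ => by ring
    rw [hs] at h
    have : ∑ i, A.transpose j i * u i = ∑ i, A i j * u i :=
      Finset.sum_congr rfl fun i _ => by rw [Matrix.transpose_apply]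
    rw [this]
    have : ∑ i, P.transpose j i * w i = ∑ i, P i j * w i :=
      Finset.sum_congr rfl fun i _ => by rw [Matrix.transpose_apply]
    rw [this]
    linarith
  have hY : 0 ≤ Y.transpose.mulVec w := by
    intro l
    have h := hfg (Sum.inr (Sum.inl l))
    simp only [hg, Sum.elim_inl, Sum.elim_inr] at h
    rw [clm_decompose] at h
    simp only [Pi.zero_apply, zero_mul, Finset.sum_const_zero, add_zero] at h
    have hs : ∑ i, Y i l * f (Pi.single i 1, 0) = -∑ i, Y i l * w i := by
      rw [← Finset.sum_neg_distrib]
      exact Finset.sum_congr rfl fun i _ => by rw [hfs]; ring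
    rw [hs] at h
    have h2 : (Y.transpose.mulVec w) l = ∑ i, Y i l * w i := by
      rw [mulVec_apply_sum]
      exact Finset.sum_congr rfl fun i _ => by rw [Matrix.transpose_apply]
    simp only [Pi.zero_apply]
    rw [h2]
    linarith
  refine ⟨u, w, hunn, hAP, hY, ?_⟩
  rw [clm_decompose] at hfx
  have hs1 : ∑ i, y i * f (Pi.single i 1, 0) = -(w ⬝ᵥ y) := by
    rw [dotProduct, ← Finset.sum_neg_distrib]
    exact Finset.sum_congr rfl fun i _ => by rw [hfs]; ring
  have hs2 : ∑ i, b i * f (0, Pi.single i 1) = b ⬝ᵥ u := by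
    rw [dotProduct]
  rw [hs1, hs2] at hfx
  linarith

end FarkasUpper

section Phi
variable {q : ℕ}

theorem phi_eval {m : ℕ} (c : Fin (q+1) → ℝ) (hcq : c (Fin.last q) = 1)
    (φ : (Fin (q + 1) → ℝ) → (Fin (q + 1) → ℝ) → ℝ)
    (hφ : ∀ y ys, φ y ys = (∑ i : Fin q, y i.castSucc * ys i.castSucc) +
      y (Fin.last q) * (1 - ∑ i : Fin q, c i.castSucc * ys i.castSucc) - ys (Fin.last q))
    (b : Fin m → ℝ) (u : Fin m → ℝ) (w : Fin (q+1) → ℝ) (hcw : c ⬝ᵥ w = 1) (k : ℝ)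
    (y : Fin (q+1) → ℝ) :
    φ y (Function.update w (Fin.last q) (b ⬝ᵥ u) -
        k • (Pi.single (Fin.last q) 1 : Fin (q + 1) → ℝ))
      = w ⬝ᵥ y - b ⬝ᵥ u + k := by
  set ts := Function.update w (Fin.last q) (b ⬝ᵥ u) -
    k • (Pi.single (Fin.last q) 1 : Fin (q + 1) → ℝ) with hts
  have hne : ∀ i : Fin q, i.castSucc ≠ Fin.last q := fun i => (Fin.castSucc_lt_last i).ne
  have hcs : ∀ i : Fin q, ts i.castSucc = w i.castSucc := by
    intro i
    simp [hts, Function.update_of_ne (hne i), Pi.single_eq_of_ne (hne i)]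
  have hlast : ts (Fin.last q) = b ⬝ᵥ u - k := by
    simp [hts, Function.update_self]
  have hw : w ⬝ᵥ y = ∑ i : Fin q, w i.castSucc * y i.castSucc
      + w (Fin.last q) * y (Fin.last q) := by
    rw [dotProduct, Fin.sum_univ_castSucc]
  have hcwexp : ∑ i : Fin q, c i.castSucc * w i.castSucc + w (Fin.last q) = 1 := by
    have h := hcw
    rw [dotProduct, Fin.sum_univ_castSucc, hcq, one_mul] at h
    exact h
  rw [hφ]
  have h1 : ∑ i : Fin q, y i.castSucc * ts i.castSucc
      = ∑ i : Fin q, w i.castSucc * y i.castSucc :=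
    Finset.sum_congr rfl fun i _ => by rw [hcs i]; ring
  have h2 : ∑ i : Fin q, c i.castSucc * ts i.castSucc
      = ∑ i : Fin q, c i.castSucc * w i.castSucc :=
    Finset.sum_congr rfl fun i _ => by rw [hcs i]
  rw [h1, h2, hlast, hw]
  linear_combination (-(y (Fin.last q))) * hcwexp

theorem phi_affine (c : Fin (q+1) → ℝ)
    (φ : (Fin (q + 1) → ℝ) → (Fin (q + 1) → ℝ) → ℝ)
    (hφ : ∀ y ys, φ y ys = (∑ i : Fin q, y i.castSucc * ys i.castSucc) +
      y (Fin.last q) * (1 - ∑ i : Fin q, c i.castSucc * ys i.castSucc) - ys (Fin.last q))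
    (y s₁ s₂ : Fin (q+1) → ℝ) {a b : ℝ} (hab : a + b = 1) :
    φ y (a • s₁ + b • s₂) = a * φ y s₁ + b * φ y s₂ := by
  have e1 : ∀ z : Fin (q+1) → ℝ, ∑ i : Fin q, z i.castSucc * (a • s₁ + b • s₂) i.castSucc
      = a * ∑ i : Fin q, z i.castSucc * s₁ i.castSucc
        + b * ∑ i : Fin q, z i.castSucc * s₂ i.castSucc := by
    intro z
    rw [Finset.mul_sum, Finset.mul_sum, ← Finset.sum_add_distrib]
    refine Finset.sum_congr rfl fun i _ => ?_
    simp only [Pi.add_apply, Pi.smul_apply, smul_eq_mul]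
    ring
  have e2 : (a • s₁ + b • s₂) (Fin.last q) = a * s₁ (Fin.last q) + b * s₂ (Fin.last q) := by
    simp
  rw [hφ, hφ, hφ, e1 y, e1 c, e2]
  linear_combination (-(y (Fin.last q))) * hab

theorem phi_continuous (c : Fin (q+1) → ℝ)
    (φ : (Fin (q + 1) → ℝ) → (Fin (q + 1) → ℝ) → ℝ)
    (hφ : ∀ y ys, φ y ys = (∑ i : Fin q, y i.castSucc * ys i.castSucc) +
      y (Fin.last q) * (1 - ∑ i : Fin q, c i.castSucc * ys i.castSucc) - ys (Fin.last q))
    (y : Fin (q+1) → ℝ) : Continuous (fun s => φ y s) := by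
  have h1 : Continuous (fun s : Fin (q+1) → ℝ =>
      ∑ i : Fin q, y i.castSucc * s i.castSucc) :=
    continuous_finset_sum _ fun i _ => continuous_const.mul (continuous_apply i.castSucc)
  have h2 : Continuous (fun s : Fin (q+1) → ℝ =>
      ∑ i : Fin q, c i.castSucc * s i.castSucc) :=
    continuous_finset_sum _ fun i _ => continuous_const.mul (continuous_apply i.castSucc)
  have h3 : Continuous (fun s : Fin (q+1) → ℝ =>
      (∑ i : Fin q, y i.castSucc * s i.castSucc) +
      y (Fin.last q) * (1 - ∑ i : Fin q, c i.castSucc * s i.castSucc) - s (Fin.last q)) :=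
    ((h1.add (continuous_const.mul (continuous_const.sub h2))).sub (continuous_apply (Fin.last q)))
  have : (fun s => φ y s) = fun s : Fin (q+1) → ℝ =>
      (∑ i : Fin q, y i.castSucc * s i.castSucc) +
      y (Fin.last q) * (1 - ∑ i : Fin q, c i.castSucc * s i.castSucc) - s (Fin.last q) := by
    funext s; rw [hφ]
  rw [this]
  exact h3

end Phi

/-- explicit form of the lower image -/
def LSet (q m n o : ℕ) (A : Matrix (Fin m) (Fin n) ℝ) (P : Matrix (Fin (q + 1)) (Fin n) ℝ)
    (b : Fin m → ℝ) (Y : Matrix (Fin (q + 1)) (Fin o) ℝ) (c : Fin (q+1) → ℝ) :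
    Set (Fin (q + 1) → ℝ) :=
  {ys | ∃ (u : Fin m → ℝ) (w : Fin (q+1) → ℝ) (k : ℝ), 0 ≤ u ∧
    A.transpose.mulVec u = P.transpose.mulVec w ∧ c ⬝ᵥ w = 1 ∧ 0 ≤ Y.transpose.mulVec w ∧
    0 ≤ k ∧ ys = Function.update w (Fin.last q) (b ⬝ᵥ u) -
      k • (Pi.single (Fin.last q) 1 : Fin (q + 1) → ℝ)}

section LowerFacts
variable {q m n o : ℕ}

theorem transpose_dot {a nn : ℕ} (M : Matrix (Fin a) (Fin nn) ℝ) (v : Fin a → ℝ)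
    (x : Fin nn → ℝ) : (M.transpose.mulVec v) ⬝ᵥ x = v ⬝ᵥ (M.mulVec x) := by
  rw [Matrix.mulVec_transpose, ← Matrix.dotProduct_mulVec]

theorem dot_le_dot {a : ℕ} {u v w : Fin a → ℝ} (hu : 0 ≤ u) (hvw : v ≤ w) :
    u ⬝ᵥ v ≤ u ⬝ᵥ w :=
  Finset.sum_le_sum fun i _ => mul_le_mul_of_nonneg_left (hvw i) (hu i)

theorem dual_pair {w : Fin (q+1) → ℝ} (Y : Matrix (Fin (q + 1)) (Fin o) ℝ)
    (C : Set (Fin (q + 1) → ℝ))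
    (hCY : C = {y | ∃ l : Fin o → ℝ, 0 ≤ l ∧ y = Y.mulVec l})
    (hw : 0 ≤ Y.transpose.mulVec w) {cc : Fin (q+1) → ℝ} (hcc : cc ∈ C) : 0 ≤ w ⬝ᵥ cc := by
  rw [hCY] at hcc
  obtain ⟨l, hl, rfl⟩ := hcc
  rw [Matrix.dotProduct_mulVec, ← Matrix.mulVec_transpose]
  exact Finset.sum_nonneg fun i _ => mul_nonneg (hw i) (hl i)

theorem interior_push {c : Fin (q+1) → ℝ} {C : Set (Fin (q + 1) → ℝ)}
    (hc : c ∈ interior C) (v : Fin (q+1) → ℝ) : ∃ t : ℝ, 0 < t ∧ c + t • v ∈ C := by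
  have hnhds : C ∈ nhds c := mem_interior_iff_mem_nhds.mp hc
  rw [Metric.mem_nhds_iff] at hnhds
  obtain ⟨ε, hε, hball⟩ := hnhds
  refine ⟨ε / (2 * (‖v‖ + 1)), by positivity, hball ?_⟩
  rw [Metric.mem_ball, dist_eq_norm]
  have h1 : c + (ε / (2 * (‖v‖ + 1))) • v - c = (ε / (2 * (‖v‖ + 1))) • v := by
    abel
  rw [h1, norm_smul, Real.norm_eq_abs, abs_of_pos (by positivity)]
  have hv : 0 ≤ ‖v‖ := norm_nonneg v
  rw [div_mul_eq_mul_div, div_lt_iff₀ (by positivity)]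
  nlinarith

theorem cw_pos {c : Fin (q+1) → ℝ} {C : Set (Fin (q + 1) → ℝ)}
    (Y : Matrix (Fin (q + 1)) (Fin o) ℝ)
    (hCY : C = {y | ∃ l : Fin o → ℝ, 0 ≤ l ∧ y = Y.mulVec l})
    (hc : c ∈ interior C) {w : Fin (q+1) → ℝ}
    (hw : 0 ≤ Y.transpose.mulVec w) (hw0 : w ≠ 0) : 0 < c ⬝ᵥ w := by
  obtain ⟨t, ht, hmem⟩ := interior_push hc (-w)
  have h := dual_pair Y C hCY hw hmem
  rw [dotProduct_add, dotProduct_smul, dotProduct_neg, smul_eq_mul] at h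
  have hww : 0 < w ⬝ᵥ w := by
    have hnn : 0 ≤ w ⬝ᵥ w := Finset.sum_nonneg fun i _ => mul_self_nonneg (w i)
    rcases lt_or_eq_of_le hnn with h' | h'
    · exact h'
    · exact absurd (dotProduct_self_eq_zero.mp h'.symm) hw0
  have hwc : 0 < w ⬝ᵥ c := by nlinarith
  rwa [dotProduct_comm]

theorem coord_bound {c : Fin (q+1) → ℝ} {C : Set (Fin (q + 1) → ℝ)}
    (Y : Matrix (Fin (q + 1)) (Fin o) ℝ)
    (hCY : C = {y | ∃ l : Fin o → ℝ, 0 ≤ l ∧ y = Y.mulVec l})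
    (hc : c ∈ interior C) :
    ∃ β : Fin (q+1) → ℝ, ∀ w : Fin (q+1) → ℝ, 0 ≤ Y.transpose.mulVec w → c ⬝ᵥ w = 1 →
      ∀ i, |w i| ≤ β i := by
  have key : ∀ i : Fin (q+1), ∃ B : ℝ, ∀ w : Fin (q+1) → ℝ,
      0 ≤ Y.transpose.mulVec w → c ⬝ᵥ w = 1 → |w i| ≤ B := by
    intro i
    obtain ⟨t₁, ht₁, hm₁⟩ := interior_push hc (Pi.single i 1)
    obtain ⟨t₂, ht₂, hm₂⟩ := interior_push hc (-(Pi.single i 1))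
    refine ⟨max (1/t₁) (1/t₂), fun w hw hcw => ?_⟩
    have h1 := dual_pair Y C hCY hw hm₁
    have h2 := dual_pair Y C hCY hw hm₂
    have hwc : w ⬝ᵥ c = 1 := by rwa [dotProduct_comm]
    have hsing : w ⬝ᵥ (Pi.single i 1 : Fin (q+1) → ℝ) = w i := by
      simp [dotProduct, Pi.single_apply]
    rw [dotProduct_add, dotProduct_smul, hsing, hwc, smul_eq_mul] at h1
    rw [dotProduct_add, dotProduct_smul, dotProduct_neg, hsing, hwc,
      smul_eq_mul] at h2
    rw [abs_le]
    constructor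
    · have hlow : (-1 : ℝ)/t₁ ≤ w i := by
        rw [div_le_iff₀ ht₁]; nlinarith
      have := le_max_left (1/t₁) (1/t₂)
      have hneg : -(max (1/t₁) (1/t₂)) ≤ -(1/t₁) := by linarith
      have : -(1/t₁) = (-1 : ℝ)/t₁ := by ring
      linarith
    · have hup : w i ≤ 1/t₂ := by
        rw [le_div_iff₀ ht₂]; nlinarith
      exact le_trans hup (le_max_right _ _)
  choose β hβ using key
  exact ⟨β, fun w hw hcw i => hβ i w hw hcw⟩

theorem LSet_convex (A : Matrix (Fin m) (Fin n) ℝ) (P : Matrix (Fin (q + 1)) (Fin n) ℝ)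
    (b : Fin m → ℝ) (Y : Matrix (Fin (q + 1)) (Fin o) ℝ) (c : Fin (q+1) → ℝ) :
    Convex ℝ (LSet q m n o A P b Y c) := by
  rintro ys₁ ⟨u₁, w₁, k₁, hu₁, hA₁, hc₁, hY₁, hk₁, rfl⟩
    ys₂ ⟨u₂, w₂, k₂, hu₂, hA₂, hc₂, hY₂, hk₂, rfl⟩ a b' ha hb' hab
  refine ⟨a • u₁ + b' • u₂, a • w₁ + b' • w₂, a*k₁ + b'*k₂, ?_, ?_, ?_, ?_, ?_, ?_⟩
  · intro i
    have := add_nonneg (mul_nonneg ha (hu₁ i)) (mul_nonneg hb' (hu₂ i))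
    simpa using this
  · rw [Matrix.mulVec_add, Matrix.mulVec_add, Matrix.mulVec_smul, Matrix.mulVec_smul,
      Matrix.mulVec_smul, Matrix.mulVec_smul, hA₁, hA₂]
  · rw [dotProduct_add, dotProduct_smul, dotProduct_smul, hc₁, hc₂]
    simp [hab]
  · intro i
    rw [Matrix.mulVec_add, Matrix.mulVec_smul, Matrix.mulVec_smul]
    have := add_nonneg (mul_nonneg ha (hY₁ i)) (mul_nonneg hb' (hY₂ i))
    simpa using this
  · exact add_nonneg (mul_nonneg ha hk₁) (mul_nonneg hb' hk₂)
  · funext i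
    simp only [Pi.add_apply, Pi.smul_apply, Pi.sub_apply, Function.update_apply,
      Pi.single_apply, smul_eq_mul, dotProduct_add, dotProduct_smul]
    by_cases hi : i = Fin.last q <;> simp [hi] <;> ring

theorem LSet_closed (A : Matrix (Fin m) (Fin n) ℝ) (P : Matrix (Fin (q + 1)) (Fin n) ℝ)
    (b : Fin m → ℝ) (Y : Matrix (Fin (q + 1)) (Fin o) ℝ) (c : Fin (q+1) → ℝ)
    (hcq : c (Fin.last q) = 1)
    (x₀ : Fin n → ℝ) (hx₀ : b ≤ A.mulVec x₀) :
    IsClosed (LSet q m n o A P b Y c) := by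
  apply IsSeqClosed.isClosed
  intro Z ys hZ hlim
  choose un wn kn hu hA hc hY hk hrep using hZ
  set w := Function.update ys (Fin.last q)
    (1 - ∑ j : Fin q, c j.castSucc * ys j.castSucc) with hwdef
  have hcoord : ∀ i, Filter.Tendsto (fun nn => Z nn i) Filter.atTop (nhds (ys i)) :=
    fun i => tendsto_pi_nhds.mp hlim i
  have hne : ∀ j : Fin q, j.castSucc ≠ Fin.last q := fun j => (Fin.castSucc_lt_last j).ne
  have hwcast : ∀ (nn) (j : Fin q), wn nn j.castSucc = Z nn j.castSucc := by
    intro nn j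
    rw [hrep nn]
    simp [Function.update_of_ne (hne j), Pi.single_eq_of_ne (hne j)]
  have hwlast : ∀ nn, wn nn (Fin.last q)
      = 1 - ∑ j : Fin q, c j.castSucc * wn nn j.castSucc := by
    intro nn
    have h := hc nn
    rw [dotProduct, Fin.sum_univ_castSucc, hcq, one_mul] at h
    linarith
  have hwtend : ∀ i, Filter.Tendsto (fun nn => wn nn i) Filter.atTop (nhds (w i)) := by
    intro i
    by_cases hi : i = Fin.last q
    · subst hi
      have heqfun : (fun nn => wn nn (Fin.last q))
          = fun nn => 1 - ∑ j : Fin q, c j.castSucc * Z nn j.castSucc := by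
        funext nn
        rw [hwlast nn]
        congr 1
        exact Finset.sum_congr rfl fun j _ => by rw [hwcast nn j]
      rw [heqfun, hwdef]
      rw [Function.update_self]
      exact Filter.Tendsto.const_sub _ (tendsto_finset_sum _
        (fun j _ => Filter.Tendsto.const_mul _ (hcoord j.castSucc)))
    · obtain ⟨j, rfl⟩ := Fin.exists_castSucc_eq.2 hi
      have heqfun : (fun nn => wn nn j.castSucc) = fun nn => Z nn j.castSucc := by
        funext nn; exact hwcast nn j
      rw [heqfun, hwdef]
      rw [Function.update_of_ne (hne j)]
      exact hcoord j.castSucc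
  have hYw : 0 ≤ Y.transpose.mulVec w := by
    intro l
    have htt : Filter.Tendsto (fun nn => Y.transpose.mulVec (wn nn) l) Filter.atTop
        (nhds (Y.transpose.mulVec w l)) := by
      have : ∀ v : Fin (q+1) → ℝ, Y.transpose.mulVec v l = ∑ i, Y.transpose l i * v i :=
        fun v => mulVec_apply_sum _ _ _
      simp only [this]
      exact tendsto_finset_sum _ (fun i _ => Filter.Tendsto.const_mul _ (hwtend i))
    have hlb : ∀ nn, (0:ℝ) ≤ Y.transpose.mulVec (wn nn) l := fun nn => hY nn l
    exact ge_of_tendsto' htt hlb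
  have hcw : c ⬝ᵥ w = 1 := by
    rw [dotProduct, Fin.sum_univ_castSucc, hcq, one_mul]
    have h1 : ∀ j : Fin q, w j.castSucc = ys j.castSucc := by
      intro j; rw [hwdef, Function.update_of_ne (hne j)]
    have h2 : w (Fin.last q) = 1 - ∑ j : Fin q, c j.castSucc * ys j.castSucc := by
      rw [hwdef, Function.update_self]
    rw [Finset.sum_congr rfl (fun j _ => by rw [h1 j]), h2]
    ring
  have hval : ∀ x, b ≤ A.mulVec x → ys (Fin.last q) ≤ (P.transpose.mulVec w) ⬝ᵥ x := by
    intro x hx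
    have hn : ∀ nn, Z nn (Fin.last q) ≤ wn nn ⬝ᵥ (P.mulVec x) := by
      intro nn
      have h1 : Z nn (Fin.last q) = b ⬝ᵥ un nn - kn nn := by
        rw [hrep nn]; simp [Function.update_self]
      have h2 : (P.transpose.mulVec (wn nn)) ⬝ᵥ x = un nn ⬝ᵥ (A.mulVec x) := by
        rw [← hA nn, transpose_dot]
      have h3 : b ⬝ᵥ un nn ≤ un nn ⬝ᵥ (A.mulVec x) := by
        rw [dotProduct_comm b (un nn)]
        exact dot_le_dot (hu nn) hx
      have h4 := transpose_dot P (wn nn) x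
      rw [h1, ← h4, h2]
      linarith [hk nn]
    have htt : Filter.Tendsto (fun nn => wn nn ⬝ᵥ (P.mulVec x)) Filter.atTop
        (nhds (w ⬝ᵥ (P.mulVec x))) := by
      simp only [dotProduct]
      exact tendsto_finset_sum _ (fun i _ => Filter.Tendsto.mul_const _ (hwtend i))
    have := le_of_tendsto_of_tendsto' (hcoord (Fin.last q)) htt hn
    rwa [transpose_dot]
  obtain ⟨u, hu', hAu, hbu⟩ := farkas_valid A b x₀ hx₀ (P.transpose.mulVec w)
    (ys (Fin.last q)) hval
  refine ⟨u, w, b ⬝ᵥ u - ys (Fin.last q), hu', hAu, hcw, hYw, by linarith, ?_⟩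
  funext i
  by_cases hi : i = Fin.last q
  · subst hi
    simp [Function.update_self]
  · obtain ⟨j, rfl⟩ := Fin.exists_castSucc_eq.2 hi
    simp only [Pi.sub_apply, Function.update_of_ne (hne j), Pi.smul_apply,
      Pi.single_eq_of_ne (hne j), smul_eq_mul, mul_zero, sub_zero]
    rw [hwdef, Function.update_of_ne (hne j)]

theorem LSet_bound (A : Matrix (Fin m) (Fin n) ℝ) (P : Matrix (Fin (q + 1)) (Fin n) ℝ)
    (b : Fin m → ℝ) (Y : Matrix (Fin (q + 1)) (Fin o) ℝ) (c : Fin (q+1) → ℝ)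
    (β : Fin (q+1) → ℝ)
    (hβ : ∀ w : Fin (q+1) → ℝ, 0 ≤ Y.transpose.mulVec w → c ⬝ᵥ w = 1 → ∀ i, |w i| ≤ β i)
    (x₀ : Fin n → ℝ) (hx₀ : b ≤ A.mulVec x₀) :
    ∀ ys ∈ LSet q m n o A P b Y c, (∀ j : Fin q, |ys j.castSucc| ≤ β j.castSucc) ∧
      ys (Fin.last q) ≤ ∑ i, β i * |(P.mulVec x₀) i| := by
  rintro ys ⟨u, w, k, hu, hA, hc, hY, hk, rfl⟩
  have hne : ∀ j : Fin q, j.castSucc ≠ Fin.last q := fun j => (Fin.castSucc_lt_last j).ne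
  have hbw := hβ w hY hc
  constructor
  · intro j
    have : (Function.update w (Fin.last q) (b ⬝ᵥ u) -
        k • (Pi.single (Fin.last q) 1 : Fin (q + 1) → ℝ)) j.castSucc = w j.castSucc := by
      simp [Function.update_of_ne (hne j), Pi.single_eq_of_ne (hne j)]
    rw [this]
    exact hbw j.castSucc
  · have hl : (Function.update w (Fin.last q) (b ⬝ᵥ u) -
        k • (Pi.single (Fin.last q) 1 : Fin (q + 1) → ℝ)) (Fin.last q) = b ⬝ᵥ u - k := by
      simp [Function.update_self]
    rw [hl]
    have h1 : b ⬝ᵥ u ≤ u ⬝ᵥ (A.mulVec x₀) := by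
      rw [dotProduct_comm b u]
      exact dot_le_dot hu hx₀
    have h2 : u ⬝ᵥ (A.mulVec x₀) = w ⬝ᵥ (P.mulVec x₀) := by
      rw [← transpose_dot A u x₀, hA, transpose_dot]
    have h3 : w ⬝ᵥ (P.mulVec x₀) ≤ ∑ i, β i * |(P.mulVec x₀) i| := by
      rw [dotProduct]
      refine Finset.sum_le_sum fun i _ => ?_
      calc w i * P.mulVec x₀ i ≤ |w i * P.mulVec x₀ i| := le_abs_self _
      _ = |w i| * |P.mulVec x₀ i| := abs_mul _ _
      _ ≤ β i * |P.mulVec x₀ i| := mul_le_mul_of_nonneg_right (hbw i) (abs_nonneg _)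
    linarith

end LowerFacts

/-- Ambient space `ℝ^{q+1}` (the paper's `ℝ^q`).  If `S ≠ ∅`, `T ≠ ∅`
and the lower image has at least one vertex (extreme point), then the upper image equals
the set of points `y` with `φ(y, t*) ≥ 0` for every vertex `t*` of the lower image. -/
theorem stmt15 (q m n o p : ℕ)
    (A : Matrix (Fin m) (Fin n) ℝ) (P : Matrix (Fin (q + 1)) (Fin n) ℝ) (b : Fin m → ℝ)
    (Y : Matrix (Fin (q + 1)) (Fin o) ℝ) (Z : Matrix (Fin (q + 1)) (Fin p) ℝ)
    (C : Set (Fin (q + 1) → ℝ))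
    (hCZ : C = {y | 0 ≤ Z.transpose.mulVec y})
    (hCY : C = {y | ∃ l : Fin o → ℝ, 0 ≤ l ∧ y = Y.mulVec l})
    (hC_pointed : C ∩ (-C) = {0})
    (hC_solid : (interior C).Nonempty)
    (c : Fin (q + 1) → ℝ) (hc : c ∈ interior C) (hcq : c (Fin.last q) = 1)
    (S : Set (Fin n → ℝ)) (hS : S = {x | b ≤ A.mulVec x}) (hSne : S.Nonempty)
    (UpperIm : Set (Fin (q + 1) → ℝ))
    (hUpperIm : UpperIm = {y | ∃ x ∈ S, ∃ cc ∈ C, y = P.mulVec x + cc})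
    (T : Set ((Fin m → ℝ) × (Fin (q + 1) → ℝ)))
    (hT : T = {uw | 0 ≤ uw.1 ∧ A.transpose.mulVec uw.1 = P.transpose.mulVec uw.2 ∧
      c ⬝ᵥ uw.2 = 1 ∧ 0 ≤ Y.transpose.mulVec uw.2})
    (hTne : T.Nonempty)
    (LowerIm : Set (Fin (q + 1) → ℝ))
    (hLowerIm : LowerIm = {ys | ∃ uw ∈ T, ∃ k : ℝ, 0 ≤ k ∧
      ys = Function.update uw.2 (Fin.last q) (b ⬝ᵥ uw.1) - k • (Pi.single (Fin.last q) 1 : Fin (q + 1) → ℝ)})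
    (hvert : (Set.extremePoints ℝ LowerIm).Nonempty)
    (φ : (Fin (q + 1) → ℝ) → (Fin (q + 1) → ℝ) → ℝ)
    (hφ : ∀ y ys, φ y ys = (∑ i : Fin q, y i.castSucc * ys i.castSucc) +
      y (Fin.last q) * (1 - ∑ i : Fin q, c i.castSucc * ys i.castSucc) - ys (Fin.last q)) :
    UpperIm = {y | ∀ ts ∈ Set.extremePoints ℝ LowerIm, 0 ≤ φ y ts} := by
  classical
  obtain ⟨x₀, hx₀mem⟩ := hSne
  have hx₀ : b ≤ A.mulVec x₀ := by rw [hS] at hx₀mem; exact hx₀mem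
  have hLeq : LowerIm = LSet q m n o A P b Y c := by
    rw [hLowerIm, hT]
    ext ys
    constructor
    · rintro ⟨⟨u, w⟩, ⟨h1, h2, h3, h4⟩, k, hk, rfl⟩
      exact ⟨u, w, k, h1, h2, h3, h4, hk, rfl⟩
    · rintro ⟨u, w, k, h1, h2, h3, h4, hk, rfl⟩
      exact ⟨(u, w), ⟨h1, h2, h3, h4⟩, k, hk, rfl⟩
  ext y
  simp only [Set.mem_setOf_eq]
  constructor
  · -- weak duality
    intro hy ts hts
    have htsL : ts ∈ LSet q m n o A P b Y c := by
      rw [← hLeq]; exact extremePoints_subset hts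
    obtain ⟨u, w, k, hu, hA', hcw, hYw, hk, rfl⟩ := htsL
    rw [phi_eval c hcq φ hφ b u w hcw k y]
    rw [hUpperIm] at hy
    obtain ⟨x, hxS, cc, hcc, rfl⟩ := hy
    have hxS' : b ≤ A.mulVec x := by rw [hS] at hxS; exact hxS
    have h1 : w ⬝ᵥ (P.mulVec x + cc) = w ⬝ᵥ P.mulVec x + w ⬝ᵥ cc := dotProduct_add _ _ _
    have h2 : w ⬝ᵥ P.mulVec x = u ⬝ᵥ A.mulVec x := by
      rw [← transpose_dot P w x, ← hA', transpose_dot]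
    have h3 : b ⬝ᵥ u ≤ u ⬝ᵥ A.mulVec x := by
      rw [dotProduct_comm b u]; exact dot_le_dot hu hxS'
    have h4 : 0 ≤ w ⬝ᵥ cc := dual_pair Y C hCY hYw hcc
    linarith
  · -- strong direction
    intro hy
    by_contra hnot
    have hnotex : ¬ ∃ x l, b ≤ A.mulVec x ∧ (0 : Fin o → ℝ) ≤ l ∧
        y = P.mulVec x + Y.mulVec l := by
      rintro ⟨x, l, hx, hl, rfl⟩
      exact hnot (by
        rw [hUpperIm]
        exact ⟨x, by rw [hS]; exact hx, Y.mulVec l, by rw [hCY]; exact ⟨l, hl, rfl⟩, rfl⟩)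
    obtain ⟨u, w, hu, hAu, hYw, hlt⟩ := farkas_upper A P b Y y hnotex
    have hw0 : w ≠ 0 := by
      rintro rfl
      rw [Matrix.mulVec_zero] at hAu
      have h1 : b ⬝ᵥ u ≤ u ⬝ᵥ A.mulVec x₀ := by
        rw [dotProduct_comm]; exact dot_le_dot hu hx₀
      have h2 : u ⬝ᵥ A.mulVec x₀ = 0 := by
        rw [← transpose_dot A u x₀, hAu, zero_dotProduct]
      have h3 : (0 : Fin (q+1) → ℝ) ⬝ᵥ y = 0 := zero_dotProduct y
      rw [h3] at hlt
      linarith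
    have hspos : 0 < c ⬝ᵥ w := cw_pos Y hCY hc hYw hw0
    set u' : Fin m → ℝ := (c ⬝ᵥ w)⁻¹ • u with hu'def
    set w' : Fin (q+1) → ℝ := (c ⬝ᵥ w)⁻¹ • w with hw'def
    have hsinv : 0 < (c ⬝ᵥ w)⁻¹ := inv_pos.mpr hspos
    have hu'0 : 0 ≤ u' := fun i => by
      have := mul_nonneg hsinv.le (hu i)
      simpa [hu'def] using this
    have hAu' : A.transpose.mulVec u' = P.transpose.mulVec w' := by
      rw [hu'def, hw'def, Matrix.mulVec_smul, Matrix.mulVec_smul, hAu]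
    have hcw' : c ⬝ᵥ w' = 1 := by
      rw [hw'def, dotProduct_smul, smul_eq_mul, inv_mul_cancel₀ (ne_of_gt hspos)]
    have hYw' : 0 ≤ Y.transpose.mulVec w' := fun i => by
      rw [hw'def, Matrix.mulVec_smul]
      have := mul_nonneg hsinv.le (hYw i)
      simpa using this
    set D := LSet q m n o A P b Y c with hDdef
    set ts₀ := Function.update w' (Fin.last q) (b ⬝ᵥ u') -
      (0:ℝ) • (Pi.single (Fin.last q) 1 : Fin (q+1) → ℝ) with hts₀def
    have hts₀D : ts₀ ∈ D := ⟨u', w', 0, hu'0, hAu', hcw', hYw', le_refl 0, rfl⟩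
    have hvval : φ y ts₀ = w' ⬝ᵥ y - b ⬝ᵥ u' + 0 :=
      phi_eval c hcq φ hφ b u' w' hcw' 0 y
    have hvneg : φ y ts₀ < 0 := by
      rw [hvval, hu'def, hw'def, smul_dotProduct, dotProduct_smul,
        smul_eq_mul, smul_eq_mul]
      have := mul_lt_mul_of_pos_left hlt hsinv
      linarith
    set v := φ y ts₀ with hvdef
    -- bounds
    obtain ⟨β, hβ⟩ := coord_bound Y hCY hc
    have hbound := LSet_bound A P b Y c β hβ x₀ hx₀
    have hDconv : Convex ℝ D := LSet_convex A P b Y c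
    have hDclosed : IsClosed D := LSet_closed A P b Y c hcq x₀ hx₀
    have hfc : Continuous (fun ss => φ y ss) := phi_continuous c φ hφ y
    set M := (∑ j : Fin q, |y j.castSucc| * β j.castSucc) +
      |y (Fin.last q)| * (1 + ∑ j : Fin q, |c j.castSucc| * β j.castSucc) with hMdef
    have haux : ∀ ss : Fin (q+1) → ℝ, (∀ j : Fin q, |ss j.castSucc| ≤ β j.castSucc) →
        |φ y ss + ss (Fin.last q)| ≤ M := by
      intro ss hss
      have hf : φ y ss + ss (Fin.last q) = ∑ j : Fin q, y j.castSucc * ss j.castSucc +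
          y (Fin.last q) * (1 - ∑ j : Fin q, c j.castSucc * ss j.castSucc) := by
        rw [hφ]; ring
      rw [hf]
      have habs : ∀ z : Fin (q+1) → ℝ, |∑ j : Fin q, z j.castSucc * ss j.castSucc|
          ≤ ∑ j : Fin q, |z j.castSucc| * β j.castSucc := by
        intro z
        calc |∑ j : Fin q, z j.castSucc * ss j.castSucc|
            ≤ ∑ j : Fin q, |z j.castSucc * ss j.castSucc| := Finset.abs_sum_le_sum_abs _ _
          _ ≤ ∑ j : Fin q, |z j.castSucc| * β j.castSucc := Finset.sum_le_sum fun j _ => by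
              rw [abs_mul]
              exact mul_le_mul_of_nonneg_left (hss j) (abs_nonneg _)
      have h1 := habs y
      have h2 := habs c
      have h3 : |y (Fin.last q) * (1 - ∑ j : Fin q, c j.castSucc * ss j.castSucc)|
          ≤ |y (Fin.last q)| * (1 + ∑ j : Fin q, |c j.castSucc| * β j.castSucc) := by
        rw [abs_mul]
        refine mul_le_mul_of_nonneg_left ?_ (abs_nonneg _)
        calc |1 - ∑ j : Fin q, c j.castSucc * ss j.castSucc|
            ≤ |(1:ℝ)| + |∑ j : Fin q, c j.castSucc * ss j.castSucc| := abs_sub _ _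
          _ ≤ 1 + ∑ j : Fin q, |c j.castSucc| * β j.castSucc := by
              rw [abs_one]; linarith [h2]
      calc |∑ j : Fin q, y j.castSucc * ss j.castSucc +
          y (Fin.last q) * (1 - ∑ j : Fin q, c j.castSucc * ss j.castSucc)|
          ≤ |∑ j : Fin q, y j.castSucc * ss j.castSucc| +
            |y (Fin.last q) * (1 - ∑ j : Fin q, c j.castSucc * ss j.castSucc)| := abs_add_le _ _
        _ ≤ M := by rw [hMdef]; linarith
    -- the compact sublevel set
    set Dv := D ∩ (fun ss => φ y ss) ⁻¹' (Set.Iic v) with hDvdef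
    have hDvclosed : IsClosed Dv := hDclosed.inter (IsClosed.preimage hfc isClosed_Iic)
    set lo : Fin (q+1) → ℝ := fun i => if i = Fin.last q then -M - v else -β i with hlodef
    set hib : Fin (q+1) → ℝ := fun i => if i = Fin.last q then
      ∑ i, β i * |(P.mulVec x₀) i| else β i with hhidef
    have hDvsub : Dv ⊆ Set.pi Set.univ (fun i => Set.Icc (lo i) (hib i)) := by
      rintro ss ⟨hssD, hssf⟩
      have hb1 := (hbound ss hssD).1
      have hb2 := (hbound ss hssD).2
      have hssf' : φ y ss ≤ v := hssf
      intro i _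
      by_cases hi' : i = Fin.last q
      · subst hi'
        constructor
        · rw [hlodef]; simp only [eq_self_iff_true, if_true]
          have h := (abs_le.mp (haux ss hb1)).1
          linarith
        · rw [hhidef]; simp only [eq_self_iff_true, if_true]; exact hb2
      · obtain ⟨j, rfl⟩ := Fin.exists_castSucc_eq.2 hi'
        have hj := abs_le.mp (hb1 j)
        constructor
        · rw [hlodef]; simp only [if_neg hi']; exact hj.1
        · rw [hhidef]; simp only [if_neg hi']; exact hj.2
    have hDvcomp : IsCompact Dv :=
      IsCompact.of_isClosed_subset (isCompact_univ_pi fun i => isCompact_Icc) hDvclosed hDvsub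
    have hts₀Dv : ts₀ ∈ Dv := ⟨hts₀D, le_refl v⟩
    obtain ⟨s₀, hs₀Dv, hs₀min⟩ := hDvcomp.exists_isMinOn ⟨ts₀, hts₀Dv⟩ hfc.continuousOn
    have hmin' : ∀ ss ∈ Dv, φ y s₀ ≤ φ y ss := fun ss hss => isMinOn_iff.mp hs₀min ss hss
    set μ := φ y s₀ with hμdef
    have hμv : μ ≤ v := hmin' ts₀ hts₀Dv
    have hminall : ∀ ss ∈ D, μ ≤ φ y ss := by
      intro ss hss
      by_cases h : φ y ss ≤ v
      · exact hmin' ss ⟨hss, h⟩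
      · push_neg at h; linarith
    set F := D ∩ (fun ss => φ y ss) ⁻¹' (Set.Iic μ) with hFdef
    have hFsub : F ⊆ Dv := fun ss hss => ⟨hss.1, le_trans hss.2 hμv⟩
    have hFclosed : IsClosed F := hDclosed.inter (IsClosed.preimage hfc isClosed_Iic)
    have hFcomp : IsCompact F := IsCompact.of_isClosed_subset hDvcomp hFclosed hFsub
    obtain ⟨e, he⟩ := hFcomp.extremePoints_nonempty ⟨s₀, hs₀Dv.1, le_refl μ⟩
    rw [mem_extremePoints] at he
    have heD : e ∈ Set.extremePoints ℝ D := by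
      rw [mem_extremePoints]
      refine ⟨he.1.1, fun x₁ hx₁ x₂ hx₂ hseg => ?_⟩
      obtain ⟨a, b', ha, hb', hab, habe⟩ := hseg
      have hfx₁ : μ ≤ φ y x₁ := hminall x₁ hx₁
      have hfx₂ : μ ≤ φ y x₂ := hminall x₂ hx₂
      have hfe : φ y e ≤ μ := he.1.2
      have hfeq : φ y e = a * φ y x₁ + b' * φ y x₂ := by
        rw [← habe]; exact phi_affine c φ hφ y x₁ x₂ hab
      have hfe' : a * φ y x₁ + b' * φ y x₂ ≤ μ := by rw [← hfeq]; exact hfe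
      have hsplit : a * φ y x₁ + b' * φ y x₂ - μ
          = a * (φ y x₁ - μ) + b' * (φ y x₂ - μ) := by
        linear_combination μ * hab
      have hsum : a * (φ y x₁ - μ) + b' * (φ y x₂ - μ) ≤ 0 := by linarith
      have ht1 : 0 ≤ a * (φ y x₁ - μ) := mul_nonneg ha.le (by linarith)
      have ht2 : 0 ≤ b' * (φ y x₂ - μ) := mul_nonneg hb'.le (by linarith)
      have hx₁μ : φ y x₁ ≤ μ := by
        by_contra hgt; push_neg at hgt
        have : 0 < a * (φ y x₁ - μ) := mul_pos ha (by linarith)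
        linarith
      have hx₂μ : φ y x₂ ≤ μ := by
        by_contra hgt; push_neg at hgt
        have : 0 < b' * (φ y x₂ - μ) := mul_pos hb' (by linarith)
        linarith
      exact he.2 x₁ ⟨hx₁, hx₁μ⟩ x₂ ⟨hx₂, hx₂μ⟩ ⟨a, b', ha, hb', hab, habe⟩
    have hye := hy e (by rw [hLeq]; exact heD)
    have hfeμ : φ y e ≤ μ := he.1.2
    linarith
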